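/- In the Dombi construction (A₀={0}, B₀={1}, m_i = 2^{i+1}, A_{i+1} = A_i ∪ (m_i+B_i), B_{i+1} = B_i ∪ (m_i+A_i), A = ⋃A_i, B = ⋃B_i), the set A consists exactly of the nonnegative integers whose binary representation has an even number of ones, and B of those with an odd number of ones. -/

import Mathlib

/-- Representation function: number of unordered representations of `n`
as `s' + s''` with `s' < s''`, both in `S`. -/
noncomputable def R (S : Set ℕ) (n : ℕ) : ℕ :=
  {p : ℕ × ℕ | p.1 ∈ S ∧ p.2 ∈ S ∧ p.1 < p.2 ∧ p.1 + p.2 = n}.ncard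

/-- Translate of a set: `m + S`. -/
def tr (m : ℕ) (S : Set ℕ) : Set ℕ := (m + ·) '' S


/-- Iterated construction: `A_{i+1} = A_i ∪ (m_i + B_i)`, `B_{i+1} = B_i ∪ (m_i + A_i)`. -/
def AB (A0 B0 : Set ℕ) (m : ℕ → ℕ) : ℕ → Set ℕ × Set ℕ
  | 0 => (A0, B0)
  | i + 1 => ((AB A0 B0 m i).1 ∪ tr (m i) (AB A0 B0 m i).2,
              (AB A0 B0 m i).2 ∪ tr (m i) (AB A0 B0 m i).1)

lemma sum_digits_pow_add {j b : ℕ} (hb : b < 2 ^ j) :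
    (Nat.digits 2 (2 ^ j + b)).sum = (Nat.digits 2 b).sum + 1 := by
  have hL : (Nat.digits 2 b).length ≤ j := by
    rcases Nat.eq_zero_or_pos b with rfl | hb0
    · simp
    by_contra h
    push_neg at h
    have h1 : 2 ^ (j + 1) ≤ 2 ^ (Nat.digits 2 b).length :=
      Nat.pow_le_pow_right (by norm_num) h
    have h2 := Nat.base_pow_length_digits_le 2 b (by norm_num) hb0.ne'
    have hp : 2 ^ (j + 1) = 2 * 2 ^ j := by ring
    omega
  have h := Nat.digits_append_zeroes_append_digits (b := 2)
    (k := j - (Nat.digits 2 b).length) (m := 1) (n := b) (by norm_num) (by norm_num)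
  rw [Nat.add_sub_cancel' hL] at h
  have : Nat.digits 2 (2 ^ j + b)
      = Nat.digits 2 b ++ List.replicate (j - (Nat.digits 2 b).length) 0 ++ Nat.digits 2 1 := by
    rw [h]; ring_nf
  rw [this]
  simp [Nat.digits_def' (by norm_num : 1 < 2)]

lemma AB_eq (i : ℕ) :
    (AB {0} {1} (fun i => 2 ^ (i + 1)) i).1
      = {n : ℕ | n < 2 ^ (i + 1) ∧ Even ((Nat.digits 2 n).sum)} ∧
    (AB {0} {1} (fun i => 2 ^ (i + 1)) i).2
      = {n : ℕ | n < 2 ^ (i + 1) ∧ Odd ((Nat.digits 2 n).sum)} := by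
  induction i with
  | zero =>
    constructor <;> ext n <;> simp only [AB, Set.mem_setOf_eq, Set.mem_singleton_iff]
    · constructor
      · rintro rfl; simp
      · rintro ⟨hn, he⟩
        interval_cases n
        · rfl
        · simp at he
    · constructor
      · rintro rfl; simp [Nat.digits_def' (by norm_num : 1 < 2)]
      · rintro ⟨hn, ho⟩
        interval_cases n
        · simp at ho
        · rfl
  | succ i ih =>
    obtain ⟨hA, hB⟩ := ih
    have key : ∀ (P Q : ℕ → Prop), (∀ k, P (k + 1) ↔ Q k) →
        {n : ℕ | n < 2 ^ (i + 1) ∧ P ((Nat.digits 2 n).sum)}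
          ∪ tr (2 ^ (i + 1)) {n : ℕ | n < 2 ^ (i + 1) ∧ Q ((Nat.digits 2 n).sum)}
        = {n : ℕ | n < 2 ^ (i + 2) ∧ P ((Nat.digits 2 n).sum)} := by
      intro P Q hPQ
      ext n
      simp only [Set.mem_union, Set.mem_setOf_eq, tr, Set.mem_image]
      have h2 : 2 ^ (i + 2) = 2 ^ (i + 1) + 2 ^ (i + 1) := by ring
      constructor
      · rintro (⟨hn, hp⟩ | ⟨b, ⟨hb, hq⟩, rfl⟩)
        · exact ⟨by omega, hp⟩
        · refine ⟨by omega, ?_⟩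
          rw [sum_digits_pow_add hb, hPQ]
          exact hq
      · rintro ⟨hn, hp⟩
        by_cases h : n < 2 ^ (i + 1)
        · exact Or.inl ⟨h, hp⟩
        · push_neg at h
          refine Or.inr ⟨n - 2 ^ (i + 1), ⟨by omega, ?_⟩, by omega⟩
          rw [← hPQ]
          have hb : n - 2 ^ (i + 1) < 2 ^ (i + 1) := by omega
          have h3 := sum_digits_pow_add hb
          rw [Nat.add_sub_cancel' h] at h3
          rw [← h3]
          exact hp
    constructor
    · simp only [AB]
      rw [hA, hB]
      exact key Even Odd (fun k => Nat.even_add_one.trans Nat.not_even_iff_odd)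
    · simp only [AB]
      rw [hA, hB]
      exact key Odd Even (fun k => by
        rw [Nat.odd_add_one, Nat.not_odd_iff_even])

theorem stmt_8 :
    (⋃ i, (AB {0} {1} (fun i => 2 ^ (i + 1)) i).1)
        = {n : ℕ | Even ((Nat.digits 2 n).sum)} ∧
    (⋃ i, (AB {0} {1} (fun i => 2 ^ (i + 1)) i).2)
        = {n : ℕ | Odd ((Nat.digits 2 n).sum)} := by
  constructor <;> ext n <;> simp only [Set.mem_iUnion, Set.mem_setOf_eq]
  · constructor
    · rintro ⟨i, hi⟩
      rw [(AB_eq i).1] at hi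
      exact hi.2
    · intro h
      exact ⟨n, by rw [(AB_eq n).1]; exact ⟨Nat.lt_of_lt_of_le (Nat.lt_two_pow_self (n := n)) (Nat.pow_le_pow_right (by norm_num) (Nat.le_succ n)), h⟩⟩
  · constructor
    · rintro ⟨i, hi⟩
      rw [(AB_eq i).2] at hi
      exact hi.2
    · intro h
      exact ⟨n, by rw [(AB_eq n).2]; exact ⟨Nat.lt_of_lt_of_le (Nat.lt_two_pow_self (n := n)) (Nat.pow_le_pow_right (by norm_num) (Nat.le_succ n)), h⟩⟩
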